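/- For all x ∈ [-1, 1], (π/√2)·√(1-x) ≥ arccos(x), with equality exactly when x = 1 or x = -1. -/

import Mathlib

open Real

/-- For all `x ∈ [-1,1]`, `(π/√2)√(1-x) ≥ arccos x`, with equality iff `x = 1` or `x = -1`. -/
theorem sqrt_ineq_arccos (x : ℝ) (hx : x ∈ Set.Icc (-1 : ℝ) 1) :
    (π / Real.sqrt 2) * Real.sqrt (1 - x) ≥ Real.arccos x ∧
      ((π / Real.sqrt 2) * Real.sqrt (1 - x) = Real.arccos x ↔ x = 1 ∨ x = -1) := by
  obtain ⟨hx1, hx2⟩ := hx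
  set θ := Real.arccos x with hθ
  have hθ0 : 0 ≤ θ := Real.arccos_nonneg x
  have hθπ : θ ≤ π := Real.arccos_le_pi x
  have hcos : Real.cos θ = x := Real.cos_arccos hx1 hx2
  have hπ : (0:ℝ) < π := Real.pi_pos
  have hs2 : (0:ℝ) < Real.sqrt 2 := Real.sqrt_pos.mpr (by norm_num)
  have hsin : Real.sin (θ / 2) = Real.sqrt ((1 - x) / 2) := by
    rw [← hcos]
    exact Real.sin_half_eq_sqrt hθ0 (by linarith)
  have hsqrt : Real.sqrt (1 - x) = Real.sqrt 2 * Real.sin (θ / 2) := by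
    rw [hsin, ← Real.sqrt_mul (by norm_num : (0:ℝ) ≤ 2)]
    congr 1; ring
  have hLHS : (π / Real.sqrt 2) * Real.sqrt (1 - x) = π * Real.sin (θ / 2) := by
    rw [hsqrt]; field_simp
  have ht0 : 0 ≤ θ / 2 := by linarith
  have ht2 : θ / 2 ≤ π / 2 := by linarith
  have hmain : θ ≤ π * Real.sin (θ / 2) := by
    have := Real.mul_le_sin ht0 ht2
    have h := mul_le_mul_of_nonneg_left this hπ.le
    calc θ = π * (2 / π * (θ / 2)) := by field_simp
    _ ≤ π * Real.sin (θ / 2) := h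
  refine ⟨by rw [hLHS]; exact hmain, ?_, ?_⟩
  · intro heq
    rw [hLHS] at heq
    by_contra hne
    push_neg at hne
    have hx1' : x < 1 := lt_of_le_of_ne hx2 hne.1
    have hx2' : -1 < x := lt_of_le_of_ne (le_of_lt (lt_of_le_of_ne hx1 (Ne.symm hne.2))) (Ne.symm hne.2) |>.trans_le le_rfl
    have hθ0' : 0 < θ := by
      rcases lt_or_eq_of_le hθ0 with h | h
      · exact h
      · exfalso; have := hcos; rw [← h, Real.cos_zero] at this; exact hne.1 this.symm
    have hθπ' : θ < π := by
      rcases lt_or_eq_of_le hθπ with h | h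
      · exact h
      · exfalso; have := hcos; rw [h, Real.cos_pi] at this; exact hne.2 this.symm
    have hstrict := Real.mul_lt_sin (by linarith : 0 < θ / 2) (by linarith : θ / 2 < π / 2)
    have h := mul_lt_mul_of_pos_left hstrict hπ
    have : θ < π * Real.sin (θ / 2) := by
      calc θ = π * (2 / π * (θ / 2)) := by field_simp
      _ < π * Real.sin (θ / 2) := h
    linarith [heq]
  · rintro (rfl | rfl)
    · rw [hθ, Real.arccos_one, show (1:ℝ) - 1 = 0 by ring, Real.sqrt_zero, mul_zero]
    · rw [hθ, Real.arccos_neg_one, show (1:ℝ) - -1 = 2 by ring]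
      field_simp
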